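/- Let R be a commutative ring containing ℚ and Cₘ = R[x₁,…,xₘ] the differential algebra with derivations ∂/∂x₁,…,∂/∂xₘ. Then Cₘ satisfies no nontrivial differential polynomial identity: for every nonzero differential polynomial f ∈ R{y₁,…,yₙ} (in commuting derivation operators δ₁,…,δₘ) there exist polynomials p₁,…,pₙ ∈ Cₘ with f(p₁,…,pₙ) ≠ 0. -/

import Mathlib

open MvPolynomial

/-- Apply the derivative operator `θ = δ₁^{θ 1} ⋯ δₘ^{θ m}` (with `δⱼ = ∂/∂xⱼ`)
to a polynomial in `R[x₁,…,xₘ]`. -/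
noncomputable def applyTheta {R : Type*} [CommRing R] {m : ℕ} (θ : Fin m → ℕ)
    (p : MvPolynomial (Fin m) R) : MvPolynomial (Fin m) R :=
  (List.finRange m).foldr (fun j q => (fun t => pderiv j t)^[θ j] q) p

open Finsupp in
lemma aux_pderiv_iterate {R : Type*} [CommRing R] {m : ℕ} (j : Fin m) (k : ℕ)
    (d : Fin m →₀ ℕ) (c : R) :
    (fun t => pderiv j t)^[k] (monomial d c)
      = monomial (d - Finsupp.single j k) (((d j).descFactorial k : ℕ) • c) := by
  induction k with
  | zero => simp
  | succ k ih =>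
    rw [Function.iterate_succ_apply', ih, pderiv_monomial]
    have h1 : (d - Finsupp.single j k) j = d j - k := by simp
    have h2 : d - Finsupp.single j k - Finsupp.single j 1 = d - Finsupp.single j (k+1) := by
      rw [tsub_tsub, ← Finsupp.single_add]
    rw [h1, h2]
    congr 1
    rw [Nat.descFactorial_succ, nsmul_eq_mul, nsmul_eq_mul]
    push_cast
    ring

lemma aux_listsum_single_apply {m : ℕ} (θ : Fin m → ℕ) (l : List (Fin m)) (j : Fin m)
    (hj : j ∉ l) : ((l.map fun i => Finsupp.single i (θ i)).sum) j = 0 := by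
  induction l with
  | nil => simp
  | cons i l ihl =>
    simp only [List.mem_cons, not_or] at hj
    rw [List.map_cons, List.sum_cons, Finsupp.add_apply,
      Finsupp.single_apply, if_neg (fun h => hj.1 h.symm), zero_add]
    exact ihl hj.2

lemma aux_foldr_monomial {R : Type*} [CommRing R] {m : ℕ} (θ : Fin m → ℕ)
    (l : List (Fin m)) (hl : l.Nodup) (d : Fin m →₀ ℕ) (c : R) :
    l.foldr (fun j q => (fun t => pderiv j t)^[θ j] q) (monomial d c)
      = monomial (d - (l.map fun j => Finsupp.single j (θ j)).sum)
          ((l.map fun j => (d j).descFactorial (θ j)).prod • c) := by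
  induction l with
  | nil => simp
  | cons j l ih =>
    have hj : j ∉ l := (List.nodup_cons.mp hl).1
    rw [List.foldr_cons, ih (List.nodup_cons.mp hl).2, aux_pderiv_iterate]
    have h1 : (d - (l.map fun j => Finsupp.single j (θ j)).sum) j = d j := by
      rw [Finsupp.tsub_apply, aux_listsum_single_apply θ l j hj, Nat.sub_zero]
    rw [h1, List.map_cons, List.sum_cons, List.map_cons, List.prod_cons,
      tsub_tsub, add_comm, mul_smul]

open Finsupp in
lemma aux_constantCoeff_applyTheta_monomial {R : Type*} [CommRing R] {m : ℕ}
    (θ' θ : Fin m → ℕ) (c : R) :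
    constantCoeff (applyTheta θ' (monomial (equivFunOnFinite.symm θ) c))
      = if θ' = θ then (∏ j, (θ j).factorial) • c else 0 := by
  rw [applyTheta, aux_foldr_monomial θ' _ (List.nodup_finRange m)]
  have hsum : ((List.finRange m).map fun j => Finsupp.single j (θ' j)).sum
      = equivFunOnFinite.symm θ' := by
    rw [equivFunOnFinite_symm_eq_sum, Fin.sum_univ_def]
  have hprod : ((List.finRange m).map fun j =>
      ((equivFunOnFinite.symm θ) j).descFactorial (θ' j)).prod
      = ∏ j, (θ j).descFactorial (θ' j) := by
    rw [Fin.prod_univ_def]; rfl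
  rw [hsum, hprod, constantCoeff_monomial]
  by_cases h : θ' = θ
  · subst h
    rw [if_pos (tsub_self _), if_pos rfl]
    congr 1
    exact Finset.prod_congr rfl fun j _ => by
      show ((equivFunOnFinite.symm θ') j).descFactorial (θ' j) = _
      rw [equivFunOnFinite_symm_apply_apply, Nat.descFactorial_self]
  · rw [if_neg h]
    by_cases h2 : equivFunOnFinite.symm θ - equivFunOnFinite.symm θ' = 0
    · rw [if_pos h2]
      have hle : ∀ j, θ j ≤ θ' j := by
        intro j
        have := congrArg (fun s => s j) h2
        simp only [Finsupp.tsub_apply, Finsupp.coe_zero, Pi.zero_apply,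
          equivFunOnFinite_symm_apply_apply] at this
        omega
      obtain ⟨j₀, hj₀⟩ : ∃ j₀, θ j₀ ≠ θ' j₀ := by
        by_contra hc; push_neg at hc; exact h (funext fun j => (hc j).symm)
      have hz : (θ j₀).descFactorial (θ' j₀) = 0 :=
        Nat.descFactorial_eq_zero_iff_lt.mpr (lt_of_le_of_ne (hle j₀) hj₀)
      rw [Finset.prod_eq_zero (Finset.mem_univ j₀) hz, zero_smul]
    · rw [if_neg h2]

lemma aux_applyTheta_add {R : Type*} [CommRing R] {m : ℕ} (θ : Fin m → ℕ)
    (p q : MvPolynomial (Fin m) R) :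
    applyTheta θ (p + q) = applyTheta θ p + applyTheta θ q := by
  unfold applyTheta
  induction List.finRange m with
  | nil => simp
  | cons j l ih =>
    rw [List.foldr_cons, List.foldr_cons, List.foldr_cons, ih]
    generalize (List.foldr _ p l) = P
    generalize (List.foldr _ q l) = Q
    induction θ j with
    | zero => simp
    | succ k ihk =>
      rw [Function.iterate_succ_apply', Function.iterate_succ_apply',
        Function.iterate_succ_apply', ihk, map_add]

lemma aux_applyTheta_zero {R : Type*} [CommRing R] {m : ℕ} (θ : Fin m → ℕ) :
    applyTheta θ (0 : MvPolynomial (Fin m) R) = 0 := by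
  unfold applyTheta
  induction List.finRange m with
  | nil => simp
  | cons j l ih =>
    rw [List.foldr_cons, ih]
    induction θ j with
    | zero => simp
    | succ k ihk => rw [Function.iterate_succ_apply', ihk, map_zero]

lemma aux_applyTheta_sum {R : Type*} [CommRing R] {m : ℕ} (θ : Fin m → ℕ)
    {ι : Type*} (S : Finset ι) (g : ι → MvPolynomial (Fin m) R) :
    applyTheta θ (∑ v ∈ S, g v) = ∑ v ∈ S, applyTheta θ (g v) := by
  classical
  induction S using Finset.induction with
  | empty => simpa using aux_applyTheta_zero θ
  | insert _ _ h ih => rw [Finset.sum_insert h, Finset.sum_insert h, aux_applyTheta_add, ih]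

theorem aux_exists_eval_ne_zero {R : Type*} [CommRing R] [Algebra ℚ R] {σ : Type*}
    (f : MvPolynomial σ R) (hf : f ≠ 0) : ∃ b : σ → R, eval b f ≠ 0 := by
  classical
  obtain ⟨s₀, hs₀⟩ := ne_zero_iff.mp hf
  have : Nontrivial R := nontrivial_of_ne _ _ hs₀
  obtain ⟨φ, hφ⟩ : ∃ φ : Module.Dual ℚ R, φ (coeff s₀ f) ≠ 0 := by
    by_contra h
    push_neg at h
    exact hs₀ ((Module.forall_dual_apply_eq_zero_iff ℚ _).mp (by simpa using h))
  set g : MvPolynomial σ ℚ := ∑ s ∈ f.support, monomial s (φ (coeff s f)) with hg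
  have hgne : g ≠ 0 := by
    have hc : coeff s₀ g = φ (coeff s₀ f) := by
      rw [hg, coeff_sum, Finset.sum_eq_single s₀ (fun b _ hbne => by
        rw [coeff_monomial, if_neg hbne]) (fun hb => absurd (mem_support_iff.mpr hs₀) hb)]
      rw [coeff_monomial, if_pos rfl]
    intro h0
    rw [h0, coeff_zero] at hc
    exact hφ hc.symm
  have hex : ¬ (∀ q : σ → ℚ, eval q g = eval q 0) := fun h => hgne (MvPolynomial.funext h)
  push_neg at hex
  obtain ⟨q, hq⟩ := hex
  rw [map_zero] at hq
  refine ⟨fun j => algebraMap ℚ R (q j), fun h0 => ?_⟩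
  apply hq
  have key : φ (eval (fun j => algebraMap ℚ R (q j)) f) = eval q g := by
    rw [hg, map_sum, eval_eq, map_sum]
    refine Finset.sum_congr rfl fun s hs => ?_
    rw [eval_monomial]
    have h1 : (∏ j ∈ s.support, (fun j => algebraMap ℚ R (q j)) j ^ s j)
        = algebraMap ℚ R (∏ j ∈ s.support, q j ^ s j) := by
      rw [map_prod]; exact Finset.prod_congr rfl fun j _ => by rw [map_pow]
    rw [h1, mul_comm, ← Algebra.smul_def, map_smul, smul_eq_mul, Finsupp.prod, mul_comm]
  rw [← key, h0, map_zero]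

/-- `Cₘ = R[x₁,…,xₘ]` with the partial derivatives satisfies no nontrivial
differential polynomial identity: for every nonzero differential polynomial
`f ∈ R{y₁,…,yₙ}` (modelled as a polynomial in the variables `yᵢ^θ`) there exist
polynomials `p₁,…,pₙ ∈ Cₘ` with `f(p₁,…,pₙ) ≠ 0`. -/
lemma aux_cc_aeval {R : Type*} [CommRing R] {σ : Type*} {m : ℕ}
    (g' : σ → MvPolynomial (Fin m) R) (f : MvPolynomial σ R) :
    constantCoeff (aeval g' f) = eval (fun v => constantCoeff (g' v)) f := by
  induction f using MvPolynomial.induction_on with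
  | C r => simp
  | add q r hq hr => rw [map_add, map_add, hq, hr, map_add]
  | mul_X q v hq => rw [map_mul, map_mul, map_mul, hq, aeval_X, eval_X]


theorem stmt17 {R : Type*} [CommRing R] [Algebra ℚ R] {m n : ℕ}
    (f : MvPolynomial (Fin n × (Fin m → ℕ)) R) (hf : f ≠ 0) :
    ∃ p : Fin n → MvPolynomial (Fin m) R,
      aeval (fun v : Fin n × (Fin m → ℕ) => applyTheta v.2 (p v.1)) f ≠ 0 := by
  classical
  obtain ⟨b, hb⟩ := aux_exists_eval_ne_zero f hf
  set V : Finset (Fin n × (Fin m → ℕ)) := f.vars with hV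
  set a : Fin n × (Fin m → ℕ) → R :=
    fun v => algebraMap ℚ R (1 / (∏ j, ((v.2 j).factorial : ℚ))) * b v with ha
  set p : Fin n → MvPolynomial (Fin m) R :=
    fun i => ∑ v ∈ V.filter (fun v => v.1 = i),
      monomial (Finsupp.equivFunOnFinite.symm v.2) (a v) with hp
  refine ⟨p, fun h0 => ?_⟩
  set gg : Fin n × (Fin m → ℕ) → R :=
    fun v => constantCoeff (applyTheta v.2 (p v.1)) with hggdef
  have hcc : constantCoeff (aeval (fun v : Fin n × (Fin m → ℕ) =>
      applyTheta v.2 (p v.1)) f) = eval gg f :=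
    aux_cc_aeval _ f
  -- gg agrees with b on the variables of f
  have hgg : ∀ v ∈ V, gg v = b v := by
    intro v hv
    rw [hggdef, hp]
    simp only
    rw [aux_applyTheta_sum, map_sum]
    have hvf : v ∈ V.filter (fun w => w.1 = v.1) := Finset.mem_filter.mpr ⟨hv, rfl⟩
    rw [Finset.sum_eq_single v (fun w hw hwne => by
        rw [aux_constantCoeff_applyTheta_monomial]
        have h1 : w.1 = v.1 := (Finset.mem_filter.mp hw).2
        have hne2 : v.2 ≠ w.2 := fun h2 => hwne (Prod.ext h1 h2.symm)
        rw [if_neg hne2]) (fun hnv => absurd hvf hnv)]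
    rw [aux_constantCoeff_applyTheta_monomial, if_pos rfl, ha]
    simp only
    have hN : ((∏ j, ((v.2 j).factorial : ℚ))) ≠ 0 := by positivity
    rw [nsmul_eq_mul]
    have hcast : ((∏ j, (v.2 j).factorial : ℕ) : R)
        = algebraMap ℚ R (∏ j, ((v.2 j).factorial : ℚ)) := by
      rw [← map_natCast (algebraMap ℚ R)]
      congr 1
      push_cast
      rfl
    rw [hcast, ← mul_assoc, ← map_mul, mul_one_div_cancel hN, map_one, one_mul]
  have heval : eval gg f = eval b f := by
    rw [eval_eq, eval_eq]
    refine Finset.sum_congr rfl fun s hs => ?_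
    congr 1
    refine Finset.prod_congr rfl fun v hv => ?_
    rw [hgg v ((mem_vars v).mpr ⟨s, hs, hv⟩)]
  apply hb
  rw [← heval, ← hcc, h0, map_zero]
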